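/- Let A be an n×n real matrix such that every complex eigenvalue z of A (i.e., every root of its characteristic polynomial over ℂ) satisfies |z| < 1. Then the n²×n² matrix I_{n²} − A ⊗ A, where ⊗ denotes the Kronecker product, is invertible. -/

import Mathlib

open Matrix

attribute [local instance] Matrix.frobeniusNormedAddCommGroup Matrix.frobeniusNormedRing
  Matrix.frobeniusNormedAlgebra

lemma charpoly_eval_aux {n : ℕ} (B : Matrix (Fin n) (Fin n) ℂ) (z : ℂ) :
    B.charpoly.eval z = (Matrix.scalar (Fin n) z - B).det := by
  rw [Matrix.charpoly, eval_det, Matrix.matPolyEquiv_charmatrix]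
  simp

lemma mem_spectrum_iff_aux {n : ℕ} (B : Matrix (Fin n) (Fin n) ℂ) (z : ℂ) :
    z ∈ spectrum ℂ B ↔ B.charpoly.IsRoot z := by
  rw [spectrum.mem_iff, Polynomial.IsRoot, charpoly_eval_aux,
    Matrix.isUnit_iff_isUnit_det, isUnit_iff_ne_zero, not_ne_iff]
  have : algebraMap ℂ (Matrix (Fin n) (Fin n) ℂ) z = Matrix.scalar (Fin n) z := by
    simp [Matrix.algebraMap_eq_diagonal, Matrix.scalar_apply]
  rw [this]

/-- If every complex eigenvalue of the real n×n matrix A (i.e., every root of its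
characteristic polynomial over ℂ) has modulus strictly less than one, then the n²×n² matrix
I − A ⊗ A (with ⊗ the Kronecker product) is invertible. -/
theorem one_sub_kronecker_isUnit (n : ℕ) (hn : 1 ≤ n) (A : Matrix (Fin n) (Fin n) ℝ)
    (hA : ∀ z : ℂ, ((A.map Complex.ofReal).charpoly).IsRoot z → ‖z‖ < 1) :
    IsUnit ((1 : Matrix (Fin n × Fin n) (Fin n × Fin n) ℝ)
      - Matrix.kroneckerMap (· * ·) A A) := by
  haveI : NeZero n := ⟨by omega⟩
  set B : Matrix (Fin n) (Fin n) ℂ := A.map Complex.ofReal with hBdef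
  -- spectrum bound
  have hspec : ∀ z ∈ spectrum ℂ B, ‖z‖₊ < 1 := by
    intro z hz
    rw [mem_spectrum_iff_aux] at hz
    have h1 := hA z hz
    exact_mod_cast h1
  have hρ : spectralRadius ℂ B < (1 : NNReal) :=
    spectrum.spectralRadius_lt_of_forall_lt B hspec
  -- Gelfand: find k ≥ 1 with ‖B^k‖ < 1
  have hlim := spectrum.pow_nnnorm_pow_one_div_tendsto_nhds_spectralRadius B
  have hev : ∀ᶠ k : ℕ in Filter.atTop, (‖B ^ k‖₊ : ENNReal) ^ (1 / (k : ℝ)) < 1 :=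
    hlim.eventually_lt_const (by simpa using hρ)
  obtain ⟨k, hk1, hk⟩ := ((Filter.eventually_ge_atTop 1).and hev).exists
  have hBk : ‖B ^ k‖₊ < 1 := by
    by_contra h
    push_neg at h
    have hpos : (0 : ℝ) < 1 / (k : ℝ) := by positivity
    have : (1 : ENNReal) ≤ (‖B ^ k‖₊ : ENNReal) ^ (1 / (k : ℝ)) :=
      ENNReal.one_le_rpow (by exact_mod_cast h) hpos
    exact absurd hk (not_lt.mpr this)
  -- reduce to nonvanishing determinant
  rw [Matrix.isUnit_iff_isUnit_det, isUnit_iff_ne_zero]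
  intro hdet
  -- transfer det to ℂ
  have hmap : ((1 : Matrix (Fin n × Fin n) (Fin n × Fin n) ℝ)
      - Matrix.kroneckerMap (· * ·) A A).map (Complex.ofRealHom : ℝ →+* ℂ)
      = (1 : Matrix (Fin n × Fin n) (Fin n × Fin n) ℂ) - Matrix.kroneckerMap (· * ·) B B := by
    ext ⟨i, j⟩ ⟨l, m⟩
    simp [Matrix.map_apply, Matrix.one_apply, Matrix.sub_apply, hBdef,
      Matrix.kroneckerMap_apply]
    split_ifs <;> simp
  have hdetC : ((1 : Matrix (Fin n × Fin n) (Fin n × Fin n) ℂ)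
      - Matrix.kroneckerMap (· * ·) B B).det = 0 := by
    rw [← hmap, ← RingHom.mapMatrix_apply, ← RingHom.map_det, hdet, map_zero]
  -- produce a matrix fixed point V with B * V * Bᵀ = V
  obtain ⟨v, hv0, hv⟩ := Matrix.exists_mulVec_eq_zero_iff.mpr hdetC
  have hv' : (Matrix.kroneckerMap (· * ·) B B) *ᵥ v = v := by
    have h := hv
    rw [Matrix.sub_mulVec, Matrix.one_mulVec, sub_eq_zero] at h
    exact h.symm
  set V : Matrix (Fin n) (Fin n) ℂ := Matrix.of (fun i j => v (i, j)) with hVdef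
  have key : B * V * Bᵀ = V := by
    ext i j
    have h := congrFun hv' (i, j)
    simp only [Matrix.mulVec, dotProduct, Matrix.kroneckerMap_apply,
      Fintype.sum_prod_type] at h
    simp only [Matrix.mul_apply, Matrix.transpose_apply, hVdef, Matrix.of_apply,
      Finset.sum_mul]
    rw [← h]
    conv_lhs => rw [Finset.sum_comm]
    apply Finset.sum_congr rfl
    intro l _
    apply Finset.sum_congr rfl
    intro m _
    ring
  have iter : ∀ m : ℕ, B ^ m * V * (Bᵀ) ^ m = V := by
    intro m
    induction m with
    | zero => simp
    | succ m ih =>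
      have : B ^ (m + 1) * V * (Bᵀ) ^ (m + 1)
          = B * (B ^ m * V * (Bᵀ) ^ m) * Bᵀ := by
        rw [pow_succ' B, pow_succ Bᵀ]
        simp only [mul_assoc]
      rw [this, ih, key]
  have hVne : V ≠ 0 := by
    intro h
    apply hv0
    funext p
    have := congrFun (congrFun h p.1) p.2
    simpa [hVdef] using this
  have hVpos : (0 : ℝ) < ‖V‖ := by
    rw [norm_pos_iff]
    exact hVne
  -- final contradiction
  have hle : ‖V‖ ≤ ‖B ^ k‖ * ‖V‖ * ‖B ^ k‖ := by
    conv_lhs => rw [← iter k]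
    calc ‖B ^ k * V * (Bᵀ) ^ k‖ ≤ ‖B ^ k * V‖ * ‖(Bᵀ) ^ k‖ := norm_mul_le _ _
      _ ≤ ‖B ^ k‖ * ‖V‖ * ‖(Bᵀ) ^ k‖ :=
          mul_le_mul_of_nonneg_right (norm_mul_le _ _) (norm_nonneg _)
      _ = ‖B ^ k‖ * ‖V‖ * ‖B ^ k‖ := by
          rw [← Matrix.transpose_pow, Matrix.frobenius_norm_transpose]
  have hBkr : ‖B ^ k‖ < 1 := hBk
  have hBknn : (0 : ℝ) ≤ ‖B ^ k‖ := norm_nonneg _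
  have h2 : ‖B ^ k‖ * ‖B ^ k‖ < 1 := by nlinarith
  nlinarith [mul_lt_mul_of_pos_right h2 hVpos]
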